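/- Let T be a tree and let u, v, w be vertices of T forming a path uvw with deg_T(v) = 2 and deg_T(w) = 1. Then for any middle 3-rainbow dominating function f on T of minimum weight, |f(uv)| + |f(v)| + |f(vw)| + |f(w)| ≥ 3, where uv and vw are the corresponding edges viewed as vertices of the middle graph. -/

import Mathlib

open SimpleGraph Finset

/-- A `k`-rainbow dominating function on a graph `H`. -/
def IsRDF {W : Type*} (H : SimpleGraph W) (k : ℕ) (f : W → Finset (Fin k)) : Prop :=
  ∀ w, f w = ∅ → ∀ c : Fin k, ∃ u, H.Adj w u ∧ c ∈ f u

/-- The weight of a rainbow dominating function. -/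
noncomputable def rdfWeight {W : Type*} [Fintype W] {k : ℕ} (f : W → Finset (Fin k)) : ℕ :=
  ∑ w, (f w).card

/-- The `k`-rainbow domination number of a graph. -/
noncomputable def rdn {W : Type*} [Fintype W] (H : SimpleGraph W) (k : ℕ) : ℕ :=
  sInf {n | ∃ f : W → Finset (Fin k), IsRDF H k f ∧ rdfWeight f = n}

/-- The middle graph of `G`, on vertex set `V(G) ⊕ E(G)`. -/
def middleGraph {V : Type*} (G : SimpleGraph V) : SimpleGraph (V ⊕ G.edgeSet) where
  Adj x y :=
    match x, y with
    | Sum.inl _, Sum.inl _ => False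
    | Sum.inl v, Sum.inr e => v ∈ (e : Sym2 V)
    | Sum.inr e, Sum.inl v => v ∈ (e : Sym2 V)
    | Sum.inr e, Sum.inr f => e ≠ f ∧ ∃ v, v ∈ (e : Sym2 V) ∧ v ∈ (f : Sym2 V)
  symm := by
    constructor
    rintro (v | e) (w | f) h
    · exact h.elim
    · exact h
    · exact h
    · exact ⟨Ne.symm h.1, h.2.imp fun v hv => ⟨hv.2, hv.1⟩⟩
  loopless := by
    constructor
    rintro (v | e) h
    · exact h.elim
    · exact h.1 rfl

/-- The middle `k`-rainbow domination number `γ*_{rk}(G)`. -/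
noncomputable def mrdn {V : Type*} [Fintype V] (G : SimpleGraph V) (k : ℕ) : ℕ :=
  letI := Classical.decEq V
  letI : DecidableRel G.Adj := fun _ _ => Classical.dec _
  rdn (middleGraph G) k

/-- The `k`-rainbow domatic number: the maximum size of a family of `k`-rainbow
dominating functions with `∑ i |f i v| ≤ k` for each vertex `v`. -/
noncomputable def rdomatic {W : Type*} (H : SimpleGraph W) (k : ℕ) : ℕ :=
  sSup {d | ∃ F : Fin d → W → Finset (Fin k), Function.Injective F ∧
    (∀ i, IsRDF H k (F i)) ∧ ∀ w, (∑ i, (F i w).card) ≤ k}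

/-- The matching number `α'(G)`. -/
noncomputable def matchingNumber {V : Type*} [Fintype V] (G : SimpleGraph V) : ℕ :=
  sSup {n | ∃ M : Finset (Sym2 V), ↑M ⊆ G.edgeSet ∧
    (∀ e ∈ M, ∀ f ∈ M, e ≠ f → ∀ v : V, ¬(v ∈ e ∧ v ∈ f)) ∧ M.card = n}

/-- For a path `uvw` in a tree `T` with `deg v = 2`, `deg w = 1`,
any minimum-weight middle 3-rainbow dominating function `f` satisfies
`|f(uv)| + |f(v)| + |f(vw)| + |f(w)| ≥ 3`. -/
theorem stmt10 {V : Type*} [Fintype V] [DecidableEq V] (T : SimpleGraph V)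
    [DecidableRel T.Adj] (hT : T.IsTree) (u v w : V)
    (huv : T.Adj u v) (hvw : T.Adj v w) (huw : u ≠ w)
    (hdv : T.degree v = 2) (hdw : T.degree w = 1)
    (f : (V ⊕ T.edgeSet) → Finset (Fin 3)) (hf : IsRDF (middleGraph T) 3 f)
    (hmin : rdfWeight f = mrdn T 3) :
    3 ≤ (f (Sum.inr ⟨s(u,v), T.mem_edgeSet.mpr huv⟩)).card + (f (Sum.inl v)).card +
        (f (Sum.inr ⟨s(v,w), T.mem_edgeSet.mpr hvw⟩)).card + (f (Sum.inl w)).card := by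
  classical
  -- neighbors of w in T: only v
  have hw1 : ∀ z, T.Adj w z → z = v := by
    intro z hz
    obtain ⟨a, ha⟩ := Finset.card_eq_one.mp hdw
    have hv' : v ∈ T.neighborFinset w := by
      rw [SimpleGraph.mem_neighborFinset]; exact hvw.symm
    have hz' : z ∈ T.neighborFinset w := by
      rw [SimpleGraph.mem_neighborFinset]; exact hz
    rw [ha, Finset.mem_singleton] at hv' hz'
    rw [hz', hv']
  -- neighbors of v in T: u and w
  have hv2 : ∀ z, T.Adj v z → z = u ∨ z = w := by
    intro z hz
    have hsub : ({u, w} : Finset V) ⊆ T.neighborFinset v := by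
      intro x hx
      rw [Finset.mem_insert, Finset.mem_singleton] at hx
      rw [SimpleGraph.mem_neighborFinset]
      rcases hx with rfl | rfl
      · exact huv.symm
      · exact hvw
    have hcard : (T.neighborFinset v).card ≤ ({u, w} : Finset V).card := by
      rw [Finset.card_insert_of_notMem (by simpa using huw), Finset.card_singleton]
      exact le_of_eq hdv
    have heq := Finset.eq_of_subset_of_card_le hsub hcard
    have hz' : z ∈ T.neighborFinset v := by
      rw [SimpleGraph.mem_neighborFinset]; exact hz
    rw [← heq, Finset.mem_insert, Finset.mem_singleton] at hz'
    exact hz'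
  -- classify edges containing w
  have hew : ∀ e : T.edgeSet, w ∈ (e : Sym2 V) →
      e = ⟨s(v,w), T.mem_edgeSet.mpr hvw⟩ := by
    rintro ⟨e, he⟩ hwe
    obtain ⟨z, rfl⟩ := Sym2.mem_iff_exists.mp hwe
    have hz : T.Adj w z := T.mem_edgeSet.mp he
    have : z = v := hw1 z hz
    subst this
    exact Subtype.ext (Sym2.eq_swap)
  -- classify edges containing v
  have hev : ∀ e : T.edgeSet, v ∈ (e : Sym2 V) →
      e = ⟨s(u,v), T.mem_edgeSet.mpr huv⟩ ∨ e = ⟨s(v,w), T.mem_edgeSet.mpr hvw⟩ := by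
    rintro ⟨e, he⟩ hve
    obtain ⟨z, rfl⟩ := Sym2.mem_iff_exists.mp hve
    have hz : T.Adj v z := T.mem_edgeSet.mp he
    rcases hv2 z hz with rfl | rfl
    · exact Or.inl (Subtype.ext Sym2.eq_swap)
    · exact Or.inr rfl
  have hcard3 : ∀ S : Finset (Fin 3), (∀ c, c ∈ S) → S.card = 3 := by
    intro S hS
    have : S = Finset.univ := Finset.eq_univ_iff_forall.mpr hS
    rw [this]; simp
  by_cases hD : f (Sum.inl w) = ∅
  · -- then f(vw) must contain all colors
    have hall : ∀ c : Fin 3, c ∈ f (Sum.inr ⟨s(v,w), T.mem_edgeSet.mpr hvw⟩) := by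
      intro c
      obtain ⟨y, hy, hc⟩ := hf (Sum.inl w) hD c
      rcases y with x | e
      · exact hy.elim
      · have hwe : w ∈ (e : Sym2 V) := hy
        rw [hew e hwe] at hc
        exact hc
    have := hcard3 _ hall
    omega
  · by_cases hB : f (Sum.inl v) = ∅
    · -- colors covered by f(uv) ∪ f(vw)
      have hall : ∀ c : Fin 3, c ∈ f (Sum.inr ⟨s(u,v), T.mem_edgeSet.mpr huv⟩) ∪
          f (Sum.inr ⟨s(v,w), T.mem_edgeSet.mpr hvw⟩) := by
        intro c
        obtain ⟨y, hy, hc⟩ := hf (Sum.inl v) hB c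
        rcases y with x | e
        · exact hy.elim
        · have hve : v ∈ (e : Sym2 V) := hy
          rcases hev e hve with rfl | rfl
          · exact Finset.mem_union_left _ hc
          · exact Finset.mem_union_right _ hc
      have h3 := hcard3 _ hall
      have := Finset.card_union_le (f (Sum.inr ⟨s(u,v), T.mem_edgeSet.mpr huv⟩))
          (f (Sum.inr ⟨s(v,w), T.mem_edgeSet.mpr hvw⟩))
      omega
    · by_cases hC : f (Sum.inr ⟨s(v,w), T.mem_edgeSet.mpr hvw⟩) = ∅
      · -- colors covered by f(v) ∪ f(w) ∪ f(uv)
        have hall : ∀ c : Fin 3, c ∈ f (Sum.inr ⟨s(u,v), T.mem_edgeSet.mpr huv⟩) ∪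
            (f (Sum.inl v) ∪ f (Sum.inl w)) := by
          intro c
          obtain ⟨y, hy, hc⟩ := hf _ hC c
          rcases y with x | e
          · -- x ∈ s(v,w)
            have hx : x ∈ s(v,w) := hy
            rw [Sym2.mem_iff] at hx
            rcases hx with rfl | rfl
            · exact Finset.mem_union_right _ (Finset.mem_union_left _ hc)
            · exact Finset.mem_union_right _ (Finset.mem_union_right _ hc)
          · obtain ⟨hne, x, hx1, hx2⟩ := hy
            have hx1' : x = v ∨ x = w := Sym2.mem_iff.mp hx1
            rcases hx1' with rfl | rfl
            · rcases hev e hx2 with rfl | rfl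
              · exact Finset.mem_union_left _ hc
              · exact absurd rfl hne
            · rw [hew e hx2] at hne
              exact absurd rfl hne
        have h3 := hcard3 _ hall
        have h1 := Finset.card_union_le (f (Sum.inr ⟨s(u,v), T.mem_edgeSet.mpr huv⟩))
            (f (Sum.inl v) ∪ f (Sum.inl w))
        have h2 := Finset.card_union_le (f (Sum.inl v)) (f (Sum.inl w))
        omega
      · have h1 := Finset.card_pos.mpr (Finset.nonempty_of_ne_empty hB)
        have h2 := Finset.card_pos.mpr (Finset.nonempty_of_ne_empty hC)
        have h3 := Finset.card_pos.mpr (Finset.nonempty_of_ne_empty hD)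
        omega
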